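/- Self-duality of the massless propagator in four dimensions under Fourier transform: for every Schwartz function φ : ℝ⁴ → ℂ, both integrands below are Lebesgue integrable and ∫_{ℝ⁴} ‖k‖^{-2} φ(k) dk = ∫_{ℝ⁴} ‖ξ‖^{-2} (𝓕φ)(ξ) dξ, where 𝓕φ(ξ) = ∫_{ℝ⁴} e^{-2πi⟨k,ξ⟩} φ(k) dk is the Fourier transform. -/

import Mathlib

open MeasureTheory Real Set Complex FourierTransform

abbrev E4 := EuclideanSpace ℝ (Fin 4)

lemma finrank_E4 : Module.finrank ℝ E4 = 4 := by simp [finrank_euclideanSpace]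

lemma exp_int {a : ℝ} (ha : 0 < a) : ∫ t in Ioi (0:ℝ), rexp (-(a * t)) = a⁻¹ := by
  have h := Real.integral_rpow_mul_exp_neg_mul_Ioi (zero_lt_one) ha
  simpa [Real.Gamma_one] using h

lemma gauss_int {t : ℝ} (ht : 0 < t) :
    ∫ k : E4, rexp (-(π * t) * ‖k‖ ^ 2) = (t ^ 2)⁻¹ := by
  rw [GaussianFourier.integral_rexp_neg_mul_sq_norm (by positivity : 0 < π * t)]
  rw [finrank_E4]
  have h1 : π / (π * t) = t⁻¹ := by
    field_simp
  rw [h1, show ((4:ℕ):ℝ)/2 = ((2:ℕ):ℝ) by norm_num, Real.rpow_natCast, inv_pow]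

lemma gauss_integrable {b : ℝ} (hb : 0 < b) :
    Integrable (fun v : E4 => rexp (-b * ‖v‖ ^ 2)) := by
  have h := (GaussianFourier.integrable_cexp_neg_mul_sq_norm_add
    (b := (b:ℂ)) (by simpa using hb) 0 (0:E4)).norm
  refine h.congr (Filter.Eventually.of_forall fun v => ?_)
  have hz : (-(b:ℂ) * (‖v‖:ℂ) ^ 2 + 0 * ((inner ℝ (0:E4) v : ℝ):ℂ)) = ((-b * ‖v‖^2 : ℝ) : ℂ) := by
    push_cast; ring
  simp only [hz, Complex.norm_exp, Complex.ofReal_re]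

lemma aux (f : SchwartzMap E4 ℂ) :
    Integrable (fun k : E4 => (((‖k‖ ^ 2)⁻¹ : ℝ) : ℂ) * f k) ∧
    (∫ k : E4, (((‖k‖ ^ 2)⁻¹ : ℝ) : ℂ) * f k) =
      ∫ t in Ioi (0:ℝ), ∫ k : E4, ((π * rexp (-(π * t) * ‖k‖ ^ 2) : ℝ) : ℂ) * f k := by
  set F : ℝ × E4 → ℂ := fun p => ((π * rexp (-(π * p.1) * ‖p.2‖ ^ 2) : ℝ) : ℂ) * f p.2 with hFdef
  obtain ⟨M, hM⟩ : ∃ M, ∀ x, ‖f x‖ ≤ M := by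
    obtain ⟨C, hC⟩ := f.decay 0 0
    exact ⟨C, fun x => by simpa using hC.2 x⟩
  have hM0 : 0 ≤ M := le_trans (norm_nonneg _) (hM 0)
  have hFc : Continuous F := by
    apply Continuous.mul
    · exact Complex.continuous_ofReal.comp
        (continuous_const.mul (Real.continuous_exp.comp (by fun_prop)))
    · exact f.continuous.comp continuous_snd
  have hFm : AEStronglyMeasurable F ((volume.restrict (Ioi (0:ℝ))).prod volume) :=
    hFc.aestronglyMeasurable
  have hnorm : ∀ t : ℝ, 0 < t → ∀ k : E4,
      ‖F (t, k)‖ = π * rexp (-(π * t) * ‖k‖ ^ 2) * ‖f k‖ := by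
    intro t ht k
    have h1 : (0:ℝ) ≤ π * rexp (-(π * t) * ‖k‖ ^ 2) := by positivity
    rw [hFdef]
    simp only [norm_mul, Complex.norm_real, Real.norm_eq_abs]
    rw [_root_.abs_of_nonneg Real.pi_pos.le, _root_.abs_of_nonneg (Real.exp_pos _).le]
  have hslice : ∀ t : ℝ, 0 < t → Integrable (fun k : E4 => F (t, k)) := by
    intro t ht
    refine Integrable.mono' (f.integrable.norm.const_mul π)
      ((hFc.comp (Continuous.prodMk_right t)).aestronglyMeasurable)
      (Filter.Eventually.of_forall fun k => ?_)
    rw [hnorm t ht k]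
    have he : rexp (-(π * t) * ‖k‖ ^ 2) ≤ 1 := by
      rw [Real.exp_le_one_iff]
      have : (0:ℝ) ≤ π * t * ‖k‖ ^ 2 := by positivity
      nlinarith
    calc π * rexp (-(π * t) * ‖k‖ ^ 2) * ‖f k‖ ≤ π * 1 * ‖f k‖ := by gcongr
      _ = π * ‖f k‖ := by ring
  have hbound2 : ∀ t : ℝ, 0 < t →
      (∫ k : E4, ‖F (t, k)‖) ≤ min (π * ∫ k : E4, ‖f k‖) (π * M * (t ^ 2)⁻¹) := by
    intro t ht
    refine le_min ?_ ?_
    · rw [← MeasureTheory.integral_const_mul]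
      refine integral_mono (hslice t ht).norm (f.integrable.norm.const_mul π) fun k => ?_
      rw [hnorm t ht k]
      have he : rexp (-(π * t) * ‖k‖ ^ 2) ≤ 1 := by
        rw [Real.exp_le_one_iff]
        have : (0:ℝ) ≤ π * t * ‖k‖ ^ 2 := by positivity
        nlinarith
      calc π * rexp (-(π * t) * ‖k‖ ^ 2) * ‖f k‖ ≤ π * 1 * ‖f k‖ := by gcongr
        _ = π * ‖f k‖ := by ring
    · have hgi : Integrable (fun k : E4 => (π * M) * rexp (-(π * t) * ‖k‖ ^ 2)) :=
        (gauss_integrable (by positivity : 0 < π * t)).const_mul _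
      have hle : (∫ k : E4, ‖F (t, k)‖) ≤ ∫ k : E4, (π * M) * rexp (-(π * t) * ‖k‖ ^ 2) := by
        refine integral_mono (hslice t ht).norm hgi fun k => ?_
        rw [hnorm t ht k]
        have he : (0:ℝ) < rexp (-(π * t) * ‖k‖ ^ 2) := Real.exp_pos _
        calc π * rexp (-(π * t) * ‖k‖ ^ 2) * ‖f k‖
            = π * ‖f k‖ * rexp (-(π * t) * ‖k‖ ^ 2) := by ring
          _ ≤ π * M * rexp (-(π * t) * ‖k‖ ^ 2) := by
              gcongr
              exact hM k
      calc (∫ k : E4, ‖F (t, k)‖) ≤ _ := hle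
        _ = (π * M) * ((t ^ 2)⁻¹) := by rw [MeasureTheory.integral_const_mul, gauss_int ht]
        _ = π * M * (t ^ 2)⁻¹ := by ring
  have hFint : Integrable F ((volume.restrict (Ioi (0:ℝ))).prod volume) := by
    rw [integrable_prod_iff hFm]
    constructor
    · filter_upwards [ae_restrict_mem measurableSet_Ioi] with t ht using hslice t ht
    · have hmeas : AEStronglyMeasurable (fun t => ∫ k : E4, ‖F (t, k)‖)
          (volume.restrict (Ioi (0:ℝ))) := hFm.norm.integral_prod_right'
      set C₁ : ℝ := π * ∫ k : E4, ‖f k‖ with hC₁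
      have hC₁0 : 0 ≤ C₁ := by
        have : 0 ≤ ∫ k : E4, ‖f k‖ := integral_nonneg fun k => norm_nonneg _
        positivity
      set C₂ : ℝ := π * M with hC₂
      have hC₂0 : 0 ≤ C₂ := by positivity
      set g : ℝ → ℝ := fun t => min C₁ (C₂ * (t ^ 2)⁻¹) with hg
      have hg0 : ∀ t, 0 ≤ g t := fun t => le_min hC₁0 (by positivity)
      have hgm0 : AEStronglyMeasurable g (volume : Measure ℝ) :=
        (measurable_const.min ((measurable_id.pow_const 2).inv.const_mul C₂)).aestronglyMeasurable
      have hgm : AEStronglyMeasurable g (volume.restrict (Ioi (0:ℝ))) := hgm0.restrict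
      have hgint : IntegrableOn g (Ioi (0:ℝ)) := by
        have h1 : IntegrableOn g (Ioc (0:ℝ) 1) := by
          refine Measure.integrableOn_of_bounded (M := C₁) (by simp) hgm0 ?_
          filter_upwards with t
          rw [Real.norm_eq_abs, _root_.abs_of_nonneg (hg0 t)]
          exact min_le_left _ _
        have h2 : IntegrableOn g (Ioi (1:ℝ)) := by
          have hr : IntegrableOn (fun t : ℝ => C₂ * t ^ (-2:ℝ)) (Ioi (1:ℝ)) :=
            (integrableOn_Ioi_rpow_of_lt (by norm_num) one_pos).const_mul C₂
          refine Integrable.mono' hr (hgm.mono_set (Ioi_subset_Ioi zero_le_one)) ?_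
          filter_upwards [ae_restrict_mem measurableSet_Ioi] with t ht
          rw [Real.norm_eq_abs, _root_.abs_of_nonneg (hg0 t)]
          have h0t : (0:ℝ) < t := lt_trans one_pos ht
          have : t ^ (-2:ℝ) = (t ^ 2)⁻¹ := by
            rw [show (-2:ℝ) = -((2:ℕ):ℝ) by norm_num, Real.rpow_neg h0t.le, Real.rpow_natCast]
          rw [this]
          exact min_le_right _ _
        have : Ioi (0:ℝ) = Ioc 0 1 ∪ Ioi 1 := (Ioc_union_Ioi_eq_Ioi zero_le_one).symm
        rw [this]
        exact h1.union h2
      refine Integrable.mono' hgint hmeas ?_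
      filter_upwards [ae_restrict_mem measurableSet_Ioi] with t ht
      rw [Real.norm_eq_abs, _root_.abs_of_nonneg (integral_nonneg fun k => norm_nonneg _)]
      exact hbound2 t ht
  have h0 : ∀ᵐ k : E4, k ≠ 0 := by
    have hs : {k : E4 | ¬ k ≠ (0:E4)} = {0} := by ext k; simp
    rw [ae_iff, hs]
    exact measure_singleton 0
  have hptwise : ∀ᵐ k : E4,
      (∫ t in Ioi (0:ℝ), F (t, k)) = (((‖k‖ ^ 2)⁻¹ : ℝ) : ℂ) * f k := by
    filter_upwards [h0] with k hk
    have hknorm : (0:ℝ) < ‖k‖ := norm_pos_iff.mpr hk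
    have hk2 : (0:ℝ) < π * ‖k‖ ^ 2 := by positivity
    have hreal : (∫ t in Ioi (0:ℝ), π * rexp (-(π * t) * ‖k‖ ^ 2)) = (‖k‖ ^ 2)⁻¹ := by
      rw [MeasureTheory.integral_const_mul]
      have harg : ∀ t : ℝ, -(π * t) * ‖k‖ ^ 2 = -((π * ‖k‖ ^ 2) * t) := fun t => by ring
      simp_rw [harg]
      rw [exp_int hk2, mul_inv, ← mul_assoc, mul_inv_cancel₀ Real.pi_ne_zero, one_mul]
    calc (∫ t in Ioi (0:ℝ), ((π * rexp (-(π * t) * ‖k‖ ^ 2) : ℝ) : ℂ) * f k)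
        = (∫ t in Ioi (0:ℝ), ((π * rexp (-(π * t) * ‖k‖ ^ 2) : ℝ) : ℂ)) * f k :=
          integral_mul_const _ _
      _ = (((‖k‖ ^ 2)⁻¹ : ℝ) : ℂ) * f k := by
          have : (∫ t in Ioi (0:ℝ), ((π * rexp (-(π * t) * ‖k‖ ^ 2) : ℝ) : ℂ))
              = (((∫ t in Ioi (0:ℝ), π * rexp (-(π * t) * ‖k‖ ^ 2)) : ℝ) : ℂ) := integral_ofReal
          rw [this, hreal]
  have hswap : Integrable (F ∘ Prod.swap) (volume.prod (volume.restrict (Ioi (0:ℝ)))) :=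
    hFint.swap
  have hInt1 : Integrable (fun k : E4 => ∫ t in Ioi (0:ℝ), F (t, k)) volume :=
    hswap.integral_prod_left
  refine ⟨hInt1.congr hptwise, ?_⟩
  calc (∫ k : E4, (((‖k‖ ^ 2)⁻¹ : ℝ) : ℂ) * f k)
      = ∫ k : E4, ∫ t in Ioi (0:ℝ), F (t, k) := (integral_congr_ae hptwise).symm
    _ = ∫ t in Ioi (0:ℝ), ∫ k : E4, F (t, k) :=
        integral_integral_swap (f := fun (k : E4) (t : ℝ) => F (t, k)) hswap
    _ = _ := rfl

lemma parseval (φ : SchwartzMap E4 ℂ) {t : ℝ} (ht : 0 < t) :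
    (∫ k : E4, ((rexp (-(π * t) * ‖k‖ ^ 2) : ℝ) : ℂ) * φ k)
      = (((t ^ 2)⁻¹ : ℝ) : ℂ) *
        ∫ ξ : E4, ((rexp (-(π * t⁻¹) * ‖ξ‖ ^ 2) : ℝ) : ℂ) *
          (SchwartzMap.fourierTransformCLM ℂ φ) ξ := by
  set ψ := SchwartzMap.fourierTransformCLM ℂ φ with hψdef
  have hψ : ⇑ψ = FourierTransform.fourier ⇑φ := rfl
  have htC : (t:ℂ) ≠ 0 := Complex.ofReal_ne_zero.mpr ht.ne'
  set b : ℂ := (π:ℂ) * (t:ℂ)⁻¹ with hbdef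
  have hbre : 0 < b.re := by
    have hb' : b = ((π * t⁻¹ : ℝ) : ℂ) := by push_cast; ring
    rw [hb', Complex.ofReal_re]
    positivity
  set G : E4 → ℂ := fun v => Complex.exp (-b * ‖v‖ ^ 2) with hGdef
  have hGint : Integrable G := by
    rw [hGdef]
    refine (GaussianFourier.integrable_cexp_neg_mul_sq_norm_add hbre 0 (0:E4)).congr
      (Filter.Eventually.of_forall fun v => ?_)
    norm_num
  have hflip : (innerₗ E4).flip = innerₗ E4 :=
    LinearMap.ext fun x => LinearMap.ext fun y => real_inner_comm x y
  have mult := VectorFourier.integral_fourierIntegral_smul_eq_flip (μ := (volume : Measure E4)) (ν := (volume : Measure E4)) (L := innerₗ E4)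
    Real.continuous_fourierChar continuous_inner hGint φ.integrable
  rw [hflip] at mult
  have key1 : ∀ ξ : E4, (VectorFourier.fourierIntegral 𝐞 volume (innerₗ E4) G ξ) • φ ξ
      = (t:ℂ) ^ 2 * (((rexp (-(π * t) * ‖ξ‖ ^ 2) : ℝ) : ℂ) * φ ξ) := by
    intro ξ
    have h := fourier_gaussian_innerProductSpace (b := b) hbre ξ
    rw [smul_eq_mul,
      show VectorFourier.fourierIntegral 𝐞 volume (innerₗ E4) G ξ
        = 𝓕 (fun v : E4 => Complex.exp (-b * ‖v‖ ^ 2)) ξ from rfl, h, finrank_E4]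
    have h1 : (π:ℂ) / b = (t:ℂ) := by
      rw [hbdef]
      have hπ : ((π:ℝ):ℂ) ≠ 0 := Complex.ofReal_ne_zero.mpr Real.pi_ne_zero
      field_simp
    rw [h1, show ((4:ℕ):ℂ) / 2 = ((2:ℕ):ℂ) by norm_num, Complex.cpow_natCast]
    have h3 : -(π:ℂ) ^ 2 * (‖ξ‖:ℂ) ^ 2 / b = ((-(π * t) * ‖ξ‖ ^ 2 : ℝ) : ℂ) := by
      rw [hbdef]
      have hπ : ((π:ℝ):ℂ) ≠ 0 := Complex.ofReal_ne_zero.mpr Real.pi_ne_zero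
      push_cast
      field_simp
    rw [h3, ← Complex.ofReal_exp]
    ring
  have key2 : ∀ x : E4, G x • (VectorFourier.fourierIntegral 𝐞 volume (innerₗ E4) (⇑φ) x)
      = ((rexp (-(π * t⁻¹) * ‖x‖ ^ 2) : ℝ) : ℂ) * ψ x := by
    intro x
    rw [smul_eq_mul]
    congr 1
    · show Complex.exp (-b * ‖x‖ ^ 2) = _
      rw [Complex.ofReal_exp]
      congr 1
      rw [hbdef]
      push_cast
      ring
  calc (∫ k : E4, ((rexp (-(π * t) * ‖k‖ ^ 2) : ℝ) : ℂ) * φ k)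
      = ((t:ℂ) ^ 2)⁻¹ * ∫ k : E4, (t:ℂ) ^ 2 * (((rexp (-(π * t) * ‖k‖ ^ 2) : ℝ) : ℂ) * φ k) := by
        rw [MeasureTheory.integral_const_mul, ← mul_assoc,
          inv_mul_cancel₀ (pow_ne_zero 2 htC), one_mul]
    _ = ((t:ℂ) ^ 2)⁻¹ * ∫ ξ : E4, (VectorFourier.fourierIntegral 𝐞 volume (innerₗ E4) G ξ) • φ ξ := by
        congr 1
        exact (integral_congr_ae (Filter.Eventually.of_forall key1)).symm
    _ = ((t:ℂ) ^ 2)⁻¹ * ∫ x : E4, G x • (VectorFourier.fourierIntegral 𝐞 volume (innerₗ E4) (⇑φ) x) := by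
        rw [mult]
    _ = ((t:ℂ) ^ 2)⁻¹ * ∫ x : E4, ((rexp (-(π * t⁻¹) * ‖x‖ ^ 2) : ℝ) : ℂ) * ψ x := by
        congr 1
        exact integral_congr_ae (Filter.Eventually.of_forall key2)
    _ = _ := by push_cast; ring

theorem massless_propagator_self_dual_4d
    (φ : SchwartzMap (EuclideanSpace ℝ (Fin 4)) ℂ) :
    Integrable (fun k : EuclideanSpace ℝ (Fin 4) => (((‖k‖ ^ 2)⁻¹ : ℝ) : ℂ) * φ k) ∧
    Integrable (fun ξ : EuclideanSpace ℝ (Fin 4) =>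
        (((‖ξ‖ ^ 2)⁻¹ : ℝ) : ℂ) * FourierTransform.fourier (⇑φ) ξ) ∧
    (∫ k : EuclideanSpace ℝ (Fin 4), (((‖k‖ ^ 2)⁻¹ : ℝ) : ℂ) * φ k) =
      ∫ ξ : EuclideanSpace ℝ (Fin 4),
        (((‖ξ‖ ^ 2)⁻¹ : ℝ) : ℂ) * FourierTransform.fourier (⇑φ) ξ := by
  set ψ := SchwartzMap.fourierTransformCLM ℂ φ with hψdef
  have hψ : ⇑ψ = FourierTransform.fourier ⇑φ := rfl
  obtain ⟨hI1, hE1⟩ := aux φ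
  obtain ⟨hI2, hE2⟩ := aux ψ
  have hI2' : Integrable (fun ξ : E4 => (((‖ξ‖ ^ 2)⁻¹ : ℝ) : ℂ) * FourierTransform.fourier (⇑φ) ξ) := by
    rw [← hψ]; exact hI2
  refine ⟨hI1, hI2', ?_⟩
  have hR : (∫ ξ : E4, (((‖ξ‖ ^ 2)⁻¹ : ℝ) : ℂ) * FourierTransform.fourier (⇑φ) ξ)
      = ∫ ξ : E4, (((‖ξ‖ ^ 2)⁻¹ : ℝ) : ℂ) * ψ ξ := by rw [← hψ]
  rw [hR, hE1, hE2]
  have hsub := integral_comp_rpow_Ioi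
    (g := fun s : ℝ => ∫ ξ : E4, ((π * rexp (-(π * s) * ‖ξ‖ ^ 2) : ℝ) : ℂ) * ψ ξ)
    (p := (-1:ℝ)) (by norm_num)
  rw [← hsub]
  refine setIntegral_congr_fun measurableSet_Ioi fun t ht => ?_
  have h0t : (0:ℝ) < t := ht
  have e1 : |(-1:ℝ)| * t ^ ((-1:ℝ) - 1) = (t ^ 2)⁻¹ := by
    rw [abs_neg, abs_one, one_mul, show ((-1:ℝ) - 1) = -((2:ℕ):ℝ) by norm_num,
      Real.rpow_neg h0t.le, Real.rpow_natCast]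
  have e2 : t ^ (-1:ℝ) = t⁻¹ := Real.rpow_neg_one t
  rw [e1, e2]
  beta_reduce
  have hpull : ∀ (s : ℝ) (g : SchwartzMap E4 ℂ),
      (∫ ξ : E4, ((π * rexp (-(π * s) * ‖ξ‖ ^ 2) : ℝ) : ℂ) * g ξ)
        = (π:ℂ) * ∫ ξ : E4, ((rexp (-(π * s) * ‖ξ‖ ^ 2) : ℝ) : ℂ) * g ξ := by
    intro s g
    rw [← MeasureTheory.integral_const_mul]
    congr 1 with ξ
    push_cast
    ring
  rw [hpull t φ, hpull t⁻¹ ψ, parseval φ h0t]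
  rw [Complex.real_smul]
  push_cast
  ring
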